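/- In the coordinate model of the RBB iteration, let k ≥ 1 and let i ∈ {1,…,n} be such that e_i^k is in fluctuation mode, i.e. Σ_{j=1}^n (λ_j − λ_i)·(e_j^{k-1})²·λ_j²·(1+τ_{k-1}λ_j²) < 0, and suppose in addition that (e_i^{k-1})²·λ_i²·(1+τ_{k-1}λ_i²) ≥ Σ_{j=1}^{i-1} (e_j^{k-1})²·λ_j²·(1+τ_{k-1}λ_j²). Then |e_i^{k+1}| ≤ (1 − λ_1/λ_n)·|e_i^k|. -/
import Mathlib


set_option maxHeartbeats 1000000

/-- In the coordinate model of the RBB iteration, if at step `k+1 ≥ 1`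
the component `i` is in fluctuation mode, i.e.
`Σ_j (λ_j − λ_i)(e_j^k)²λ_j²(1+τ_kλ_j²) < 0`, and moreover
`(e_i^k)²λ_i²(1+τ_kλ_i²) ≥ Σ_{j<i} (e_j^k)²λ_j²(1+τ_kλ_j²)`, then
`|e_i^{k+2}| ≤ (1 − λ_1/λ_n)|e_i^{k+1}|`. -/
theorem rbb_coordinate_fluctuation_mode
    (n : ℕ) (lam : Fin (n + 1) → ℝ) (hpos : 0 < lam 0) (hmono : Monotone lam)
    (T : ℝ) (hT : 0 ≤ T)
    (e : ℕ → Fin (n + 1) → ℝ) (α τ : ℕ → ℝ)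
    (hτ : ∀ k, 0 ≤ τ k ∧ τ k ≤ T)
    (hα0 : lam 0 ≤ α 0 ∧ α 0 ≤ lam (Fin.last n))
    (he : ∀ k, e k ≠ 0)
    (hrec : ∀ k i, e (k + 1) i = (1 - lam i / α k) * e k i)
    (hα : ∀ k, α (k + 1) =
      (∑ i, lam i ^ 3 * (1 + τ k * lam i ^ 2) * e k i ^ 2) /
      (∑ i, lam i ^ 2 * (1 + τ k * lam i ^ 2) * e k i ^ 2)) :
    ∀ (k : ℕ) (i : Fin (n + 1)),
      (∑ j, (lam j - lam i) * e k j ^ 2 * lam j ^ 2 * (1 + τ k * lam j ^ 2)) < 0 →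
      (∑ j ∈ Finset.univ.filter (fun j => j < i),
          e k j ^ 2 * lam j ^ 2 * (1 + τ k * lam j ^ 2)) ≤
        e k i ^ 2 * lam i ^ 2 * (1 + τ k * lam i ^ 2) →
      |e (k + 2) i| ≤ (1 - lam 0 / lam (Fin.last n)) * |e (k + 1) i| := by
  intro k i hfluc hdom
  have hτk := (hτ k).1
  set L := lam (Fin.last n) with hLdef
  have hiL : lam i ≤ L := hmono (Fin.le_last i)
  have h0i : lam 0 ≤ lam i := hmono (Fin.zero_le i)
  have hLpos : 0 < L := lt_of_lt_of_le hpos (h0i.trans hiL)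
  set w : Fin (n+1) → ℝ := fun j => e k j ^ 2 * lam j ^ 2 * (1 + τ k * lam j ^ 2) with hwdef
  have hwnn : ∀ j, 0 ≤ w j := by
    intro j
    have h1 : (0:ℝ) < 1 + τ k * lam j ^ 2 := by positivity
    simp only [hwdef]
    positivity
  obtain ⟨j0, hj0⟩ : ∃ j0, e k j0 ≠ 0 := Function.ne_iff.mp (he k)
  have hj0l : 0 < lam j0 := lt_of_lt_of_le hpos (hmono (Fin.zero_le j0))
  have hwj0 : 0 < w j0 := by
    have h1 : (0:ℝ) < 1 + τ k * lam j0 ^ 2 := by positivity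
    simp only [hwdef]
    positivity
  set S := ∑ j, w j with hSdef
  have hS : 0 < S := Finset.sum_pos' (fun j _ => hwnn j) ⟨j0, Finset.mem_univ _, hwj0⟩
  set A := ∑ j, lam j * w j with hAdef
  have hαk : α (k+1) = A / S := by
    rw [hα k]
    congr 1
    · apply Finset.sum_congr rfl; intro j _; simp only [hwdef]; ring
    · apply Finset.sum_congr rfl; intro j _; simp only [hwdef]; ring
  have hfluc' : A < lam i * S := by
    have heq : A - lam i * S = ∑ j, (lam j - lam i) * e k j ^ 2 * lam j ^ 2 * (1 + τ k * lam j ^ 2) := by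
      simp only [hAdef, hSdef, Finset.mul_sum, ← Finset.sum_sub_distrib, hwdef]
      apply Finset.sum_congr rfl; intro j _; ring
    linarith [heq ▸ hfluc]
  have hAl : lam 0 * S ≤ A := by
    rw [hSdef, Finset.mul_sum]
    exact Finset.sum_le_sum fun j _ =>
      mul_le_mul_of_nonneg_right (hmono (Fin.zero_le j)) (hwnn j)
  have hApos : 0 < A := lt_of_lt_of_le (by positivity) hAl
  have hαpos : 0 < α (k+1) := by rw [hαk]; exact div_pos hApos hS
  have hαlt : α (k+1) < lam i := by
    rw [hαk, div_lt_iff₀ hS]; linarith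
  set c : ℝ := 2 - lam 0 / L with hcdef
  clear_value c
  have hdivle : lam 0 / L ≤ 1 := div_le_one_of_le₀ (h0i.trans hiL) hLpos.le
  have hc1 : 1 ≤ c := by simp only [hcdef]; linarith
  -- key inequality: lam i * S ≤ c * A
  have hkey : lam i * S ≤ c * A := by
    have hsplit :
        (∑ j ∈ Finset.univ.filter (fun j => j < i), (c * lam j - lam i) * w j) +
        (∑ j ∈ Finset.univ.filter (fun j => ¬ j < i), (c * lam j - lam i) * w j) =
        ∑ j, (c * lam j - lam i) * w j :=
      Finset.sum_filter_add_sum_filter_not _ _ _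
    have heq : c * A - lam i * S = ∑ j, (c * lam j - lam i) * w j := by
      simp only [hAdef, hSdef, Finset.mul_sum, ← Finset.sum_sub_distrib]
      apply Finset.sum_congr rfl; intro j _; ring
    have hQ : (c * lam i - lam i) * w i ≤
        ∑ j ∈ Finset.univ.filter (fun j => ¬ j < i), (c * lam j - lam i) * w j := by
      apply Finset.single_le_sum (f := fun j => (c * lam j - lam i) * w j)
      · intro j hj
        simp only [Finset.mem_filter, not_lt] at hj
        have hij : lam i ≤ lam j := hmono hj.2
        have hlj : 0 < lam j := hpos.trans_le (h0i.trans hij)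
        have : 0 ≤ c * lam j - lam i := by nlinarith
        exact mul_nonneg this (hwnn j)
      · simp
    have hSP : ∑ j ∈ Finset.univ.filter (fun j => j < i), w j ≤ w i := hdom
    have hSPnn : 0 ≤ ∑ j ∈ Finset.univ.filter (fun j => j < i), w j :=
      Finset.sum_nonneg fun j _ => hwnn j
    have hP : (c * lam 0 - lam i) * ∑ j ∈ Finset.univ.filter (fun j => j < i), w j ≤
        ∑ j ∈ Finset.univ.filter (fun j => j < i), (c * lam j - lam i) * w j := by
      rw [Finset.mul_sum]
      apply Finset.sum_le_sum
      intro j _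
      have h0j : lam 0 ≤ lam j := hmono (Fin.zero_le j)
      have : c * lam 0 - lam i ≤ c * lam j - lam i := by nlinarith
      exact mul_le_mul_of_nonneg_right this (hwnn j)
    -- combine
    have hcomb : 0 ≤ ∑ j, (c * lam j - lam i) * w j := by
      have hwi : 0 ≤ w i := hwnn i
      by_cases hcase : c * lam 0 - lam i ≤ 0
      · have h1 : (c * lam 0 - lam i) * w i ≤
            (c * lam 0 - lam i) * ∑ j ∈ Finset.univ.filter (fun j => j < i), w j :=
          mul_le_mul_of_nonpos_left hSP hcase
        have hkey2 : 0 ≤ c * lam 0 + (c - 2) * lam i := by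
          have h2 : (lam 0 / L) * lam i ≤ lam 0 := by
            rw [div_mul_eq_mul_div, div_le_iff₀ hLpos]
            nlinarith
          have h3 : lam 0 ≤ c * lam 0 := le_mul_of_one_le_left hpos.le hc1
          have h4 : c * lam 0 + (c - 2) * lam i = c * lam 0 - (lam 0 / L) * lam i := by
            simp only [hcdef]; ring
          nlinarith [mul_nonneg (by linarith : (0:ℝ) ≤ 1 - lam 0 / L) hpos.le]
        have hprod : 0 ≤ (c * lam 0 + (c - 2) * lam i) * w i := mul_nonneg hkey2 hwi
        have hring : (c * lam 0 - lam i) * w i + (c * lam i - lam i) * w i =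
            (c * lam 0 + (c - 2) * lam i) * w i := by ring
        linarith
      · push_neg at hcase
        have h1 : 0 ≤ (c * lam 0 - lam i) * ∑ j ∈ Finset.univ.filter (fun j => j < i), w j :=
          mul_nonneg hcase.le hSPnn
        have hli : 0 < lam i := hpos.trans_le h0i
        have h2 : 0 ≤ (c * lam i - lam i) * w i := mul_nonneg (by nlinarith) hwi
        linarith
    linarith [heq ▸ hcomb]
  -- finish
  have he2 : e (k+2) i = (1 - lam i / α (k+1)) * e (k+1) i := hrec (k+1) i
  rw [he2, abs_mul]
  have hone : 1 < lam i / α (k+1) := (one_lt_div hαpos).mpr hαlt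
  have habs : |1 - lam i / α (k+1)| = lam i / α (k+1) - 1 := by
    rw [abs_of_nonpos (by linarith)]; ring
  rw [habs]
  apply mul_le_mul_of_nonneg_right _ (abs_nonneg _)
  have hfrac : lam i / α (k+1) ≤ c := by
    rw [hαk, div_div_eq_mul_div, div_le_iff₀ hApos]
    exact hkey
  simp only [hcdef] at hfrac
  linarith
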